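/- Let s > 1/2, b > 1/2 and e ∈ {−1, +1}. Then there is a constant c > 0 such that for all nonnegative functions f, g, h ∈ L²(ℝ²): ∫∫∫∫_{ℝ⁴} f(ξ₁,τ₁) g(ξ₂,τ₂) h(ξ₁+ξ₂, τ₁+τ₂) · ⟨ξ₁+ξ₂⟩^{−s} · ⟨τ₂ + e|ξ₂|⟩^{−b} dξ₁ dτ₁ dξ₂ dτ₂ ≤ c ‖f‖_{L²} ‖g‖_{L²} ‖h‖_{L²}. -/

import Mathlib

open MeasureTheory
open scoped ENNReal

/-- Japanese bracket `⟨x⟩ = (1 + |x|²)^{1/2}`. -/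
noncomputable def jb (x : ℝ) : ℝ := Real.sqrt (1 + x ^ 2)

lemma jb_pos (x : ℝ) : 0 < jb x := Real.sqrt_pos.2 (by positivity)

lemma jbw_cont (r : ℝ) : Continuous fun u : ℝ => jb u ^ r := by
  have h : Continuous jb := by
    unfold jb; exact (continuous_const.add (continuous_pow 2)).sqrt
  exact h.rpow_const (fun x => Or.inl (jb_pos x).ne')

lemma jbw_nonneg (r : ℝ) (u : ℝ) : 0 ≤ jb u ^ r :=
  Real.rpow_nonneg (jb_pos u).le r

lemma jbw_sq (r : ℝ) (u : ℝ) :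
    ENNReal.ofReal (jb u ^ (-r)) ^ (2:ℝ) = ENNReal.ofReal ((1 + u^2) ^ (-r)) := by
  rw [show (2:ℝ) = ((2:ℕ):ℝ) by norm_num, ENNReal.rpow_natCast,
    ← ENNReal.ofReal_pow (jbw_nonneg _ _)]
  congr 1
  rw [← Real.rpow_natCast (jb u ^ (-r)) 2, ← Real.rpow_mul (jb_pos u).le]
  unfold jb
  rw [show (-r * (2:ℕ) : ℝ) = -(2*r) by push_cast; ring,
    ← Real.rpow_div_two_eq_sqrt (-(2*r)) (by positivity)]
  congr 1; ring

lemma Cfin {r : ℝ} (hr : 1/2 < r) :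
    (∫⁻ u : ℝ, ENNReal.ofReal (jb u ^ (-r)) ^ (2:ℝ)) < ⊤ := by
  have h2r : 0 < 2*r := by linarith
  calc (∫⁻ u : ℝ, ENNReal.ofReal (jb u ^ (-r)) ^ (2:ℝ))
      ≤ ∫⁻ u : ℝ, ENNReal.ofReal ((2:ℝ) ^ r) * ENNReal.ofReal ((1 + ‖u‖) ^ (-(2*r))) := by
        refine lintegral_mono fun u => ?_
        rw [jbw_sq, ← ENNReal.ofReal_mul (by positivity)]
        refine ENNReal.ofReal_le_ofReal ?_
        have := rpow_neg_one_add_norm_sq_le (E := ℝ) u h2r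
        have hnu : ‖u‖ ^ 2 = u ^ 2 := by rw [Real.norm_eq_abs, sq_abs]
        rw [hnu] at this
        calc (1 + u^2) ^ (-r) = (1 + u^2) ^ (-(2*r)/2) := by ring_nf
          _ ≤ 2 ^ ((2*r)/2) * (1 + ‖u‖) ^ (-(2*r)) := this
          _ = 2 ^ r * (1 + ‖u‖) ^ (-(2*r)) := by norm_num
    _ < ⊤ := by
        rw [lintegral_const_mul' _ _ ENNReal.ofReal_ne_top]
        exact ENNReal.mul_lt_top ENNReal.ofReal_lt_top
          (finite_integral_one_add_norm
            (by simpa using by linarith : ((Module.finrank ℝ ℝ : ℝ) < 2*r)))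

lemma mp_sub_left (z : ℝ × ℝ) :
    MeasurePreserving (fun x : ℝ × ℝ => z - x) volume volume := by
  have h2 := (measurePreserving_add_left (volume : Measure (ℝ × ℝ)) z).comp
    (Measure.measurePreserving_neg (volume : Measure (ℝ × ℝ)))
  simpa [Function.comp_def, sub_eq_add_neg] using h2

open ENNReal in
lemma tri (F G H W2 : ℝ × ℝ → ℝ≥0∞) (W1 : ℝ → ℝ≥0∞)
    (mF : Measurable F) (mG : Measurable G) (mH : Measurable H)
    (mW1 : Measurable W1) (mW2 : Measurable W2) (D : ℝ≥0∞)
    (hW : ∀ x : ℝ × ℝ, (∫⁻ z : ℝ × ℝ, W1 z.1 ^ (2:ℝ) * W2 (z - x) ^ (2:ℝ)) ≤ D) :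
    (∫⁻ x : ℝ × ℝ, ∫⁻ y : ℝ × ℝ, F x * G y * H (x + y) * W1 (x.1 + y.1) * W2 y)
      ≤ D ^ (1/2:ℝ) * (∫⁻ x, F x ^ (2:ℝ)) ^ (1/2:ℝ) * (∫⁻ x, G x ^ (2:ℝ)) ^ (1/2:ℝ)
        * (∫⁻ x, H x ^ (2:ℝ)) ^ (1/2:ℝ) := by
  have hconj : Real.HolderConjugate 2 2 := Real.holderConjugate_iff.mpr ⟨one_lt_two, by norm_num⟩
  set NF2 := ∫⁻ x, F x ^ (2:ℝ) with hNF2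
  set NG2 := ∫⁻ x, G x ^ (2:ℝ) with hNG2
  set NH2 := ∫⁻ x, H x ^ (2:ℝ) with hNH2
  set T : ℝ × ℝ → ℝ≥0∞ := fun z => ∫⁻ x, (F x * W2 (z - x)) * G (z - x) with hT
  have msub : ∀ x : ℝ × ℝ, Measurable fun z : ℝ × ℝ => z - x :=
    fun x => measurable_id.sub measurable_const
  have msubl : ∀ z : ℝ × ℝ, Measurable fun x : ℝ × ℝ => z - x :=
    fun z => measurable_const.sub measurable_id
  have mT : Measurable T := by
    apply Measurable.lintegral_prod_right'
      (f := fun p : (ℝ × ℝ) × (ℝ × ℝ) => (F p.2 * W2 (p.1 - p.2)) * G (p.1 - p.2))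
    exact ((mF.comp measurable_snd).mul
      (mW2.comp (measurable_fst.sub measurable_snd))).mul
      (mG.comp (measurable_fst.sub measurable_snd))
  have step1 : ∀ x : ℝ × ℝ,
      (∫⁻ y : ℝ × ℝ, F x * G y * H (x + y) * W1 (x.1 + y.1) * W2 y)
        = ∫⁻ z : ℝ × ℝ, F x * G (z - x) * H z * W1 z.1 * W2 (z - x) := by
    intro x
    have hm : Measurable fun z : ℝ × ℝ => F x * G (z - x) * H z * W1 z.1 * W2 (z - x) :=
      ((((measurable_const.mul (mG.comp (msub x))).mul mH).mul
        (mW1.comp measurable_fst)).mul (mW2.comp (msub x)))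
    rw [← (measurePreserving_add_left (volume : Measure (ℝ × ℝ)) x).lintegral_comp hm]
    apply lintegral_congr
    intro y
    simp [add_sub_cancel_left]
  have step2 :
      (∫⁻ x : ℝ × ℝ, ∫⁻ z : ℝ × ℝ, F x * G (z - x) * H z * W1 z.1 * W2 (z - x))
        = ∫⁻ z : ℝ × ℝ, H z * (W1 z.1 * T z) := by
    rw [lintegral_lintegral_swap]
    · apply lintegral_congr
      intro z
      have hm : Measurable fun x : ℝ × ℝ => (F x * W2 (z - x)) * G (z - x) :=
        (mF.mul (mW2.comp (msubl z))).mul (mG.comp (msubl z))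
      have e : (∫⁻ x : ℝ × ℝ, F x * G (z - x) * H z * W1 z.1 * W2 (z - x))
          = ∫⁻ x : ℝ × ℝ, (H z * W1 z.1) * ((F x * W2 (z - x)) * G (z - x)) := by
        apply lintegral_congr; intro x; ring
      rw [e, lintegral_const_mul'' _ hm.aemeasurable, mul_assoc]
    · apply Measurable.aemeasurable
      exact ((((mF.comp measurable_fst).mul
        (mG.comp (measurable_snd.sub measurable_fst))).mul
        (mH.comp measurable_snd)).mul
        ((mW1.comp measurable_fst).comp measurable_snd)).mul
        (mW2.comp (measurable_snd.sub measurable_fst))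
  have hTbound : ∀ z : ℝ × ℝ,
      T z ^ (2:ℝ) ≤ (∫⁻ x, F x ^ (2:ℝ) * W2 (z - x) ^ (2:ℝ)) * NG2 := by
    intro z
    have hA : Measurable fun x : ℝ × ℝ => F x * W2 (z - x) := mF.mul (mW2.comp (msubl z))
    have hB : Measurable fun x : ℝ × ℝ => G (z - x) := mG.comp (msubl z)
    have CS := ENNReal.lintegral_mul_le_Lp_mul_Lq volume hconj hA.aemeasurable hB.aemeasurable
    have e1 : (∫⁻ x, (fun x : ℝ × ℝ => F x * W2 (z - x)) x ^ (2:ℝ))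
        = ∫⁻ x, F x ^ (2:ℝ) * W2 (z - x) ^ (2:ℝ) := by
      apply lintegral_congr; intro x
      exact ENNReal.mul_rpow_of_nonneg _ _ (by norm_num)
    have e2 : (∫⁻ x : ℝ × ℝ, (fun x : ℝ × ℝ => G (z - x)) x ^ (2:ℝ)) = NG2 := by
      simp only []
      exact (mp_sub_left z).lintegral_comp (mG.pow_const _)
    rw [e1, e2] at CS
    calc T z ^ (2:ℝ)
        ≤ ((∫⁻ x, F x ^ (2:ℝ) * W2 (z - x) ^ (2:ℝ)) ^ (1/2:ℝ) * NG2 ^ (1/2:ℝ)) ^ (2:ℝ) := by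
          gcongr
          exact CS
      _ = (∫⁻ x, F x ^ (2:ℝ) * W2 (z - x) ^ (2:ℝ)) * NG2 := by
          rw [ENNReal.mul_rpow_of_nonneg _ _ (by norm_num : (0:ℝ) ≤ 2),
            ← ENNReal.rpow_mul, ← ENNReal.rpow_mul]
          norm_num
  have hQ : (∫⁻ z : ℝ × ℝ, (W1 z.1 * T z) ^ (2:ℝ)) ≤ NF2 * D * NG2 := by
    have mAz : Measurable fun z : ℝ × ℝ => ∫⁻ x, F x ^ (2:ℝ) * W2 (z - x) ^ (2:ℝ) := by
      apply Measurable.lintegral_prod_right'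
        (f := fun p : (ℝ × ℝ) × (ℝ × ℝ) => F p.2 ^ (2:ℝ) * W2 (p.1 - p.2) ^ (2:ℝ))
      exact ((mF.comp measurable_snd).pow_const _).mul
        ((mW2.comp (measurable_fst.sub measurable_snd)).pow_const _)
    calc (∫⁻ z : ℝ × ℝ, (W1 z.1 * T z) ^ (2:ℝ))
        ≤ ∫⁻ z : ℝ × ℝ, (W1 z.1 ^ (2:ℝ) * ∫⁻ x, F x ^ (2:ℝ) * W2 (z - x) ^ (2:ℝ)) * NG2 := by
          apply lintegral_mono
          intro z
          show (W1 z.1 * T z) ^ (2:ℝ)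
            ≤ (W1 z.1 ^ (2:ℝ) * ∫⁻ x, F x ^ (2:ℝ) * W2 (z - x) ^ (2:ℝ)) * NG2
          rw [ENNReal.mul_rpow_of_nonneg _ _ (by norm_num : (0:ℝ) ≤ 2), mul_assoc]
          exact mul_le_mul_right (hTbound z) _
      _ = (∫⁻ z : ℝ × ℝ, W1 z.1 ^ (2:ℝ) * ∫⁻ x, F x ^ (2:ℝ) * W2 (z - x) ^ (2:ℝ)) * NG2 :=
          lintegral_mul_const'' _
            (((mW1.comp measurable_fst).pow_const _).mul mAz).aemeasurable
      _ ≤ (NF2 * D) * NG2 := by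
          gcongr
          have l1 : (∫⁻ z : ℝ × ℝ, W1 z.1 ^ (2:ℝ) * ∫⁻ x, F x ^ (2:ℝ) * W2 (z - x) ^ (2:ℝ))
              = ∫⁻ z : ℝ × ℝ, ∫⁻ x : ℝ × ℝ,
                  W1 z.1 ^ (2:ℝ) * (F x ^ (2:ℝ) * W2 (z - x) ^ (2:ℝ)) := by
            apply lintegral_congr; intro z
            have hmz : Measurable fun x : ℝ × ℝ => F x ^ (2:ℝ) * W2 (z - x) ^ (2:ℝ) :=
              (mF.pow_const _).mul ((mW2.comp (msubl z)).pow_const _)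
            exact (lintegral_const_mul'' _ hmz.aemeasurable).symm
          have l2 : (∫⁻ x : ℝ × ℝ, ∫⁻ z : ℝ × ℝ,
                  W1 z.1 ^ (2:ℝ) * (F x ^ (2:ℝ) * W2 (z - x) ^ (2:ℝ)))
              = ∫⁻ x : ℝ × ℝ, F x ^ (2:ℝ)
                  * ∫⁻ z : ℝ × ℝ, W1 z.1 ^ (2:ℝ) * W2 (z - x) ^ (2:ℝ) := by
            apply lintegral_congr; intro x
            have e : (∫⁻ z : ℝ × ℝ, W1 z.1 ^ (2:ℝ) * (F x ^ (2:ℝ) * W2 (z - x) ^ (2:ℝ)))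
                = ∫⁻ z : ℝ × ℝ, F x ^ (2:ℝ) * (W1 z.1 ^ (2:ℝ) * W2 (z - x) ^ (2:ℝ)) := by
              apply lintegral_congr; intro z; ring
            have hmx : Measurable fun z : ℝ × ℝ => W1 z.1 ^ (2:ℝ) * W2 (z - x) ^ (2:ℝ) :=
              ((mW1.comp measurable_fst).pow_const _).mul ((mW2.comp (msub x)).pow_const _)
            rw [e, lintegral_const_mul'' _ hmx.aemeasurable]
          have l3 : (∫⁻ z : ℝ × ℝ, W1 z.1 ^ (2:ℝ) * ∫⁻ x, F x ^ (2:ℝ) * W2 (z - x) ^ (2:ℝ))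
              = ∫⁻ x : ℝ × ℝ, F x ^ (2:ℝ)
                  * ∫⁻ z : ℝ × ℝ, W1 z.1 ^ (2:ℝ) * W2 (z - x) ^ (2:ℝ) := by
            rw [l1, lintegral_lintegral_swap, l2]
            apply Measurable.aemeasurable
            exact (((mW1.comp measurable_fst).comp measurable_fst).pow_const _).mul
              (((mF.comp measurable_snd).pow_const _).mul
                ((mW2.comp (measurable_fst.sub measurable_snd)).pow_const _))
          rw [l3]
          calc (∫⁻ x : ℝ × ℝ, F x ^ (2:ℝ)
                  * ∫⁻ z : ℝ × ℝ, W1 z.1 ^ (2:ℝ) * W2 (z - x) ^ (2:ℝ))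
              ≤ ∫⁻ x : ℝ × ℝ, F x ^ (2:ℝ) * D := by
                apply lintegral_mono; intro x
                exact mul_le_mul_right (hW x) _
            _ = NF2 * D := lintegral_mul_const'' _ (mF.pow_const _).aemeasurable
  calc (∫⁻ x : ℝ × ℝ, ∫⁻ y : ℝ × ℝ, F x * G y * H (x + y) * W1 (x.1 + y.1) * W2 y)
      = ∫⁻ z : ℝ × ℝ, H z * (W1 z.1 * T z) := by
        rw [← step2]; exact lintegral_congr step1
    _ ≤ NH2 ^ (1/2:ℝ) * (∫⁻ z : ℝ × ℝ, (W1 z.1 * T z) ^ (2:ℝ)) ^ (1/2:ℝ) := by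
        have hm2 : Measurable fun z : ℝ × ℝ => W1 z.1 * T z :=
          (mW1.comp measurable_fst).mul mT
        have := ENNReal.lintegral_mul_le_Lp_mul_Lq volume hconj mH.aemeasurable
          hm2.aemeasurable
        simp only [Pi.mul_apply] at this
        exact this
    _ ≤ NH2 ^ (1/2:ℝ) * (NF2 * D * NG2) ^ (1/2:ℝ) := by gcongr
    _ = D ^ (1/2:ℝ) * NF2 ^ (1/2:ℝ) * NG2 ^ (1/2:ℝ) * NH2 ^ (1/2:ℝ) := by
        rw [ENNReal.mul_rpow_of_nonneg _ _ (by norm_num : (0:ℝ) ≤ 1/2),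
          ENNReal.mul_rpow_of_nonneg _ _ (by norm_num : (0:ℝ) ≤ 1/2)]
        ring

lemma weight_int (s b e : ℝ) (x : ℝ × ℝ) :
    (∫⁻ z : ℝ × ℝ, ENNReal.ofReal (jb z.1 ^ (-s)) ^ (2:ℝ)
        * ENNReal.ofReal (jb ((z - x).2 + e * |(z - x).1|) ^ (-b)) ^ (2:ℝ))
      = (∫⁻ u : ℝ, ENNReal.ofReal (jb u ^ (-s)) ^ (2:ℝ))
        * ∫⁻ u : ℝ, ENNReal.ofReal (jb u ^ (-b)) ^ (2:ℝ) := by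
  have mW : ∀ r : ℝ, Measurable fun u : ℝ => ENNReal.ofReal (jb u ^ (-r)) ^ (2:ℝ) :=
    fun r => ((jbw_cont (-r)).measurable.ennreal_ofReal).pow_const _
  have mu : Measurable fun z : ℝ × ℝ => (z - x).2 + e * |(z - x).1| :=
    ((measurable_id.sub measurable_const).snd).add
      (measurable_const.mul ((measurable_id.sub measurable_const).fst.abs))
  have mjoint : Measurable fun z : ℝ × ℝ => ENNReal.ofReal (jb z.1 ^ (-s)) ^ (2:ℝ)
      * ENNReal.ofReal (jb ((z - x).2 + e * |(z - x).1|) ^ (-b)) ^ (2:ℝ) :=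
    ((mW s).comp measurable_fst).mul ((mW b).comp mu)
  rw [MeasureTheory.Measure.volume_eq_prod, lintegral_prod]
  · have inner : ∀ ζ : ℝ,
        (∫⁻ σ : ℝ, ENNReal.ofReal (jb ((ζ, σ) : ℝ × ℝ).1 ^ (-s)) ^ (2:ℝ)
          * ENNReal.ofReal (jb (((ζ, σ) - x).2 + e * |((ζ, σ) - x).1|) ^ (-b)) ^ (2:ℝ))
        = ENNReal.ofReal (jb ζ ^ (-s)) ^ (2:ℝ)
          * ∫⁻ u : ℝ, ENNReal.ofReal (jb u ^ (-b)) ^ (2:ℝ) := by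
      intro ζ
      simp only [Prod.fst_sub, Prod.snd_sub]
      rw [lintegral_const_mul' _ _ (ENNReal.rpow_ne_top_of_nonneg (by norm_num)
        ENNReal.ofReal_ne_top)]
      congr 1
      have keyfun : ∀ σ : ℝ, σ - x.2 + e * |ζ - x.1|
          = σ + (e * |ζ - x.1| - x.2) := by
        intro σ; ring
      calc (∫⁻ σ : ℝ, ENNReal.ofReal (jb (σ - x.2 + e * |ζ - x.1|) ^ (-b)) ^ (2:ℝ))
          = ∫⁻ σ : ℝ, ENNReal.ofReal (jb (σ + (e * |ζ - x.1| - x.2)) ^ (-b)) ^ (2:ℝ) := by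
            apply lintegral_congr; intro σ; rw [keyfun σ]
        _ = ∫⁻ u : ℝ, ENNReal.ofReal (jb u ^ (-b)) ^ (2:ℝ) :=
            (measurePreserving_add_right volume (e * |ζ - x.1| - x.2)).lintegral_comp (mW b)
    calc (∫⁻ ζ : ℝ, ∫⁻ σ : ℝ, ENNReal.ofReal (jb ((ζ, σ) : ℝ × ℝ).1 ^ (-s)) ^ (2:ℝ)
          * ENNReal.ofReal (jb (((ζ, σ) - x).2 + e * |((ζ, σ) - x).1|) ^ (-b)) ^ (2:ℝ))
        = ∫⁻ ζ : ℝ, ENNReal.ofReal (jb ζ ^ (-s)) ^ (2:ℝ)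
          * ∫⁻ u : ℝ, ENNReal.ofReal (jb u ^ (-b)) ^ (2:ℝ) := lintegral_congr inner
      _ = (∫⁻ u : ℝ, ENNReal.ofReal (jb u ^ (-s)) ^ (2:ℝ))
          * ∫⁻ u : ℝ, ENNReal.ofReal (jb u ^ (-b)) ^ (2:ℝ) :=
          lintegral_mul_const'' _ (mW s).aemeasurable
  · exact mjoint.aemeasurable

theorem stmt12 (s b : ℝ) (hs : 1/2 < s) (hb : 1/2 < b)
    (e : ℝ) (he : e = 1 ∨ e = -1) :
    ∃ c > (0:ℝ), ∀ f g h : ℝ × ℝ → ℝ, Measurable f → Measurable g → Measurable h →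
      (∀ x, 0 ≤ f x) → (∀ x, 0 ≤ g x) → (∀ x, 0 ≤ h x) →
      MemLp f 2 volume → MemLp g 2 volume → MemLp h 2 volume →
      (∫⁻ p : (ℝ × ℝ) × (ℝ × ℝ),
        ENNReal.ofReal (f p.1 * g p.2 * h (p.1.1 + p.2.1, p.1.2 + p.2.2) *
          jb (p.1.1 + p.2.1) ^ (-s) * jb (p.2.2 + e * |p.2.1|) ^ (-b)))
      ≤ ENNReal.ofReal c * eLpNorm f 2 volume * eLpNorm g 2 volume * eLpNorm h 2 volume := by
  set Cs := ∫⁻ u : ℝ, ENNReal.ofReal (jb u ^ (-s)) ^ (2:ℝ) with hCsdef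
  set Cb := ∫⁻ u : ℝ, ENNReal.ofReal (jb u ^ (-b)) ^ (2:ℝ) with hCbdef
  have hCsfin : Cs < ⊤ := Cfin hs
  have hCbfin : Cb < ⊤ := Cfin hb
  set K := (Cs * Cb) ^ (1/2:ℝ) with hKdef
  have hKfin : K ≠ ⊤ :=
    ENNReal.rpow_ne_top_of_nonneg (by norm_num) (ENNReal.mul_ne_top hCsfin.ne hCbfin.ne)
  refine ⟨K.toReal + 1, by positivity, ?_⟩
  intro f g h mf mg mh hf0 hg0 hh0 _ _ _
  set F : ℝ × ℝ → ℝ≥0∞ := fun x => ENNReal.ofReal (f x) with hF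
  set G : ℝ × ℝ → ℝ≥0∞ := fun x => ENNReal.ofReal (g x) with hG
  set H : ℝ × ℝ → ℝ≥0∞ := fun x => ENNReal.ofReal (h x) with hH
  set W1 : ℝ → ℝ≥0∞ := fun u => ENNReal.ofReal (jb u ^ (-s)) with hW1
  set W2 : ℝ × ℝ → ℝ≥0∞ := fun y => ENNReal.ofReal (jb (y.2 + e * |y.1|) ^ (-b)) with hW2
  have mF : Measurable F := mf.ennreal_ofReal
  have mG : Measurable G := mg.ennreal_ofReal
  have mH : Measurable H := mh.ennreal_ofReal
  have mW1 : Measurable W1 := (jbw_cont (-s)).measurable.ennreal_ofReal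
  have mW2 : Measurable W2 :=
    (((jbw_cont (-b)).measurable).comp
      (measurable_snd.add (measurable_const.mul measurable_fst.abs))).ennreal_ofReal
  -- rewrite the integrand as a product and the integral as an iterated integral
  have mInt : Measurable fun p : (ℝ × ℝ) × (ℝ × ℝ) =>
      ENNReal.ofReal (f p.1 * g p.2 * h (p.1.1 + p.2.1, p.1.2 + p.2.2) *
        jb (p.1.1 + p.2.1) ^ (-s) * jb (p.2.2 + e * |p.2.1|) ^ (-b)) := by
    apply Measurable.ennreal_ofReal
    exact ((((mf.comp measurable_fst).mul (mg.comp measurable_snd)).mul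
      (mh.comp ((measurable_fst.fst.add measurable_snd.fst).prodMk
        (measurable_fst.snd.add measurable_snd.snd)))).mul
      (((jbw_cont (-s)).measurable).comp
        (measurable_fst.fst.add measurable_snd.fst))).mul
      (((jbw_cont (-b)).measurable).comp
        (measurable_snd.snd.add (measurable_const.mul measurable_snd.fst.abs)))
  have lhs_eq : (∫⁻ p : (ℝ × ℝ) × (ℝ × ℝ),
      ENNReal.ofReal (f p.1 * g p.2 * h (p.1.1 + p.2.1, p.1.2 + p.2.2) *
        jb (p.1.1 + p.2.1) ^ (-s) * jb (p.2.2 + e * |p.2.1|) ^ (-b)))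
      = ∫⁻ x : ℝ × ℝ, ∫⁻ y : ℝ × ℝ, F x * G y * H (x + y) * W1 (x.1 + y.1) * W2 y := by
    rw [MeasureTheory.Measure.volume_eq_prod, lintegral_prod _ mInt.aemeasurable]
    apply lintegral_congr; intro x
    apply lintegral_congr; intro y
    rw [ENNReal.ofReal_mul (by
        exact mul_nonneg (mul_nonneg (mul_nonneg (hf0 x) (hg0 y)) (hh0 _)) (jbw_nonneg _ _)),
      ENNReal.ofReal_mul (mul_nonneg (mul_nonneg (hf0 x) (hg0 y)) (hh0 _)),
      ENNReal.ofReal_mul (mul_nonneg (hf0 x) (hg0 y)),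
      ENNReal.ofReal_mul (hf0 x)]
    rfl
  rw [lhs_eq]
  have hW : ∀ x : ℝ × ℝ, (∫⁻ z : ℝ × ℝ, W1 z.1 ^ (2:ℝ) * W2 (z - x) ^ (2:ℝ)) ≤ Cs * Cb :=
    fun x => le_of_eq (weight_int s b e x)
  have main := tri F G H W2 W1 mF mG mH mW1 mW2 (Cs * Cb) hW
  have norm_eq : ∀ (φ : ℝ × ℝ → ℝ), (∀ x, 0 ≤ φ x) →
      (∫⁻ x : ℝ × ℝ, ENNReal.ofReal (φ x) ^ (2:ℝ)) ^ (1/2:ℝ) = eLpNorm φ 2 volume := by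
    intro φ hφ
    rw [eLpNorm_eq_lintegral_rpow_enorm_toReal (by norm_num) (by norm_num)]
    simp only [ENNReal.toReal_ofNat]
    congr 1
    apply lintegral_congr; intro x
    rw [← Real.enorm_eq_ofReal (hφ x)]
  rw [norm_eq f hf0, norm_eq g hg0, norm_eq h hh0] at main
  refine main.trans ?_
  have hKle : K ≤ ENNReal.ofReal (K.toReal + 1) := by
    calc K = ENNReal.ofReal K.toReal := (ENNReal.ofReal_toReal hKfin).symm
      _ ≤ ENNReal.ofReal (K.toReal + 1) := ENNReal.ofReal_le_ofReal (by linarith)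
  gcongr
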